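/- Let k, p, p* be real numbers with 1 < k < p < p*, and let S, Pr, θ, λ > 0. Set b₁ = S^(−k/p)·Pr/k, b₂ = θ·S^(−p*/p)/p*, and t* = ((p−k)/(b₂·p·(p*−k)))^(1/(p*−p)). Then −λ·b₁ + (t*)^(p−k)/p − b₂·(t*)^(p*−k) > 0 if and only if λ < λ*, where λ* := θ^(−(p−k)/(p*−p)) · ((p*−p)·k)/((p*−k)·p) · (((p−k)·p*)/((p*−k)·p))^((p−k)/(p*−p)) · S^((p*−k)/(p*−p)) / Pr. -/

import Mathlib

/-- Computation of the threshold λ* (display (3.5)). -/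
theorem stmt_4 (k p ps : ℝ) (hk : 1 < k) (hkp : k < p) (hpps : p < ps)
    (S Pr θ lam : ℝ) (hS : 0 < S) (hPr : 0 < Pr) (hθ : 0 < θ) (hlam : 0 < lam)
    (b₁ b₂ tstar : ℝ)
    (hb₁ : b₁ = S ^ (-k / p) * Pr / k) (hb₂ : b₂ = θ * S ^ (-ps / p) / ps)
    (htstar : tstar = ((p - k) / (b₂ * p * (ps - k))) ^ (1 / (ps - p))) :
    0 < -lam * b₁ + tstar ^ (p - k) / p - b₂ * tstar ^ (ps - k) ↔
      lam < θ ^ (-(p - k) / (ps - p)) * ((ps - p) * k) / ((ps - k) * p) *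
        ((p - k) * ps / ((ps - k) * p)) ^ ((p - k) / (ps - p)) *
        S ^ ((ps - k) / (ps - p)) / Pr := by
  have hp : (0:ℝ) < p := by linarith
  have hps : (0:ℝ) < ps := by linarith
  have hpk : (0:ℝ) < p - k := by linarith
  have hpsp : (0:ℝ) < ps - p := by linarith
  have hpsk : (0:ℝ) < ps - k := by linarith
  have hk0 : (0:ℝ) < k := by linarith
  have hb₂pos : 0 < b₂ := by rw [hb₂]; positivity
  set A : ℝ := (p - k) / (b₂ * p * (ps - k)) with hA_def
  have hA : 0 < A := by positivity
  set e : ℝ := (p - k) / (ps - p) with he_def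
  have h1 : tstar ^ (p - k) = A ^ e := by
    rw [htstar, ← Real.rpow_mul hA.le]
    congr 1
    rw [he_def]; field_simp
  have h2 : tstar ^ (ps - k) = A ^ e * A := by
    rw [htstar, ← Real.rpow_mul hA.le]
    have hexp : 1 / (ps - p) * (ps - k) = e + 1 := by
      rw [he_def]; field_simp; ring
    rw [hexp, Real.rpow_add hA, Real.rpow_one]
  have hbA : b₂ * A = (p - k) / (p * (ps - k)) := by
    rw [hA_def]; field_simp
  have hAe : 0 < A ^ e := Real.rpow_pos_of_pos hA e
  have hb₁pos : 0 < b₁ := by rw [hb₁]; positivity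
  have hC : -lam * b₁ + tstar ^ (p - k) / p - b₂ * tstar ^ (ps - k)
      = -(lam * b₁) + A ^ e * ((ps - p) / (p * (ps - k))) := by
    rw [h1, h2, show b₂ * (A ^ e * A) = A ^ e * (b₂ * A) by ring, hbA]
    field_simp
    ring
  rw [hC]
  have hiff : 0 < -(lam * b₁) + A ^ e * ((ps - p) / (p * (ps - k))) ↔
      lam < A ^ e * ((ps - p) / (p * (ps - k))) / b₁ := by
    rw [lt_div_iff₀ hb₁pos]
    constructor <;> intro h <;> nlinarith
  rw [hiff]
  set B : ℝ := (p - k) * ps / ((ps - k) * p) with hB_def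
  have hB : 0 < B := by positivity
  have hA2 : A = B * S ^ (ps / p) / θ := by
    rw [hA_def, hb₂, show -ps / p = -(ps / p) by ring, Real.rpow_neg hS.le, hB_def]
    have hSps : (0:ℝ) < S ^ (ps / p) := Real.rpow_pos_of_pos hS _
    field_simp
  have hA2e : A ^ e = B ^ e * S ^ (ps / p * e) / θ ^ e := by
    rw [hA2, Real.div_rpow (by positivity) hθ.le,
      Real.mul_rpow hB.le (Real.rpow_nonneg hS.le _), ← Real.rpow_mul hS.le]
  have hSexp : (ps - k) / (ps - p) = ps / p * e + k / p := by
    rw [he_def]; field_simp; ring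
  have hneg : -(p - k) / (ps - p) = -e := by rw [he_def]; ring
  rw [hA2e, hSexp, hneg, Real.rpow_neg hθ.le, Real.rpow_add hS, hb₁,
    show -k / p = -(k / p) by ring, Real.rpow_neg hS.le]
  have hθe : (0:ℝ) < θ ^ e := Real.rpow_pos_of_pos hθ _
  have hS1 : (0:ℝ) < S ^ (ps / p * e) := Real.rpow_pos_of_pos hS _
  have hS2 : (0:ℝ) < S ^ (k / p) := Real.rpow_pos_of_pos hS _
  have hBe : (0:ℝ) < B ^ e := Real.rpow_pos_of_pos hB _
  constructor <;> intro h <;>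
    [skip; skip] <;>
    · refine lt_of_lt_of_eq h ?_
      field_simp
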